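/- Let w be the DFS walk on a plane rooted tree, and let u < v be two indices that are consecutive in-indices. Then the subwalk w_u w_{u+1} … w_v is a path in the tree (its vertices are pairwise distinct). -/

import Mathlib

/-- A plane rooted tree: a root label together with an ordered list of subtrees. -/
inductive PTree (V : Type) : Type
  | node : V → List (PTree V) → PTree V

namespace PTree

variable {V : Type}

/-- The root label of a plane rooted tree. -/
def root : PTree V → V
  | node v _ => v

/-- The depth-first-search walk: `dfs (node v [t₁,…,tₘ]) = v dfs(t₁) v … v dfs(tₘ) v`. -/
def dfs : PTree V → List V
  | node v ts => v :: (ts.attach.map (fun t => dfs t.1 ++ [v])).flatten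
decreasing_by simp only [PTree.node.sizeOf_spec]; have := List.sizeOf_lt_of_mem t.2; omega

/-- The list of vertex labels of a plane rooted tree. -/
def verts : PTree V → List V
  | node v ts => v :: (ts.attach.map (fun t => verts t.1)).flatten
decreasing_by simp only [PTree.node.sizeOf_spec]; have := List.sizeOf_lt_of_mem t.2; omega

/-- The downward arcs (from each vertex to each of its children). -/
def downArcs : PTree V → List (V × V)
  | node v ts => (ts.map fun t => (v, root t)) ++ (ts.attach.map (fun t => downArcs t.1)).flatten
decreasing_by simp only [PTree.node.sizeOf_spec]; have := List.sizeOf_lt_of_mem t.2; omega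

/-- `AscFirst A0 t` : at every vertex, ascending children precede descending children. -/
def AscFirst (A0 : Set (V × V)) : PTree V → Prop
  | node v ts => ts.Pairwise (fun t₁ t₂ => (root t₂, v) ∈ A0 → (root t₁, v) ∈ A0) ∧
      ∀ t ∈ ts.attach, AscFirst A0 t.1
decreasing_by simp only [PTree.node.sizeOf_spec]; have := List.sizeOf_lt_of_mem t.2; omega

/-- `InIndex t A0 i k` : `k` is the in-index of the vertex `i ≠ r`. -/
def InIndex (t : PTree V) (A0 : Set (V × V)) (i : V) (k : ℕ) : Prop :=
  k < (dfs t).length - 1 ∧ (dfs t)[k]? = some i ∧ i ≠ root t ∧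
    ∀ (l : ℕ) (c : V), (dfs t)[l]? = some c → (i, c) ∈ downArcs t →
      ((c, i) ∈ A0 → l < k) ∧ ((i, c) ∈ A0 → k < l)

/-! ### Auxiliary development -/

/-- Depth list: mirrors `dfs`, recording the depth of each visited vertex. -/
def dlist : PTree V → List ℕ
  | node v ts => 0 :: (ts.attach.map (fun t => (dlist t.1).map (· + 1) ++ [0])).flatten
decreasing_by simp only [PTree.node.sizeOf_spec]; have := List.sizeOf_lt_of_mem t.2; omega

theorem consInd (P : PTree V → Prop) (h1 : ∀ v, P (node v []))
    (h2 : ∀ v t ts, P t → P (node v ts) → P (node v (t :: ts))) : ∀ t, P t := by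
  have H : ∀ n (t : PTree V), sizeOf t ≤ n → P t := by
    intro n
    induction n with
    | zero =>
      intro t h
      cases t with
      | node v ts => simp only [PTree.node.sizeOf_spec] at h; omega
    | succ n ih =>
      intro t h
      match t with
      | node v [] => exact h1 v
      | node v (t' :: ts) =>
        simp only [PTree.node.sizeOf_spec, List.cons.sizeOf_spec] at h
        refine h2 v t' ts (ih t' (by omega)) (ih (node v ts) ?_)
        simp only [PTree.node.sizeOf_spec]; omega
  exact fun t => H (sizeOf t) t le_rfl

@[simp] theorem root_node (v : V) (ts : List (PTree V)) : root (node v ts) = v := rfl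

theorem dfs_nil (v : V) : dfs (node v []) = [v] := by rw [dfs]; simp

theorem dfs_cons (v : V) (t : PTree V) (ts : List (PTree V)) :
    dfs (node v (t :: ts)) = v :: (dfs t ++ dfs (node v ts)) := by
  rw [dfs, dfs]; simp

theorem dlist_nil (v : V) : dlist (V := V) (node v []) = [0] := by rw [dlist]; simp

theorem dlist_cons (v : V) (t : PTree V) (ts : List (PTree V)) :
    dlist (node v (t :: ts)) = 0 :: ((dlist t).map (· + 1) ++ dlist (node v ts)) := by
  rw [dlist, dlist]; simp

theorem verts_nil (v : V) : verts (node v []) = [v] := by rw [verts]; simp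

theorem verts_cons_perm (v : V) (t : PTree V) (ts : List (PTree V)) :
    List.Perm (verts (node v (t :: ts))) (verts t ++ verts (node v ts)) := by
  rw [verts, verts]; simp only [List.attach_cons, List.map_cons, List.map_map,
    List.flatten_cons]
  simp
  exact List.perm_middle.symm

theorem downArcs_nil (v : V) : downArcs (V := V) (node v []) = [] := by rw [downArcs]; simp

theorem downArcs_cons_perm (v : V) (t : PTree V) (ts : List (PTree V)) :
    List.Perm (downArcs (node v (t :: ts)))
      ((v, root t) :: (downArcs t ++ downArcs (node v ts))) := by
  rw [downArcs, downArcs]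
  simp
  rw [← List.append_assoc, ← List.append_assoc]
  exact List.perm_append_comm.append_right _

theorem mem_downArcs_cons (v : V) (t : PTree V) (ts : List (PTree V)) (p : V × V) :
    p ∈ downArcs (node v (t :: ts)) ↔
      p = (v, root t) ∨ p ∈ downArcs t ∨ p ∈ downArcs (node v ts) := by
  rw [(downArcs_cons_perm v t ts).mem_iff]
  simp

theorem dfs_ne_nil (t : PTree V) : dfs t ≠ [] := by
  cases t with
  | node v ts => rw [dfs]; simp

theorem length_dfs_pos (t : PTree V) : 0 < (dfs t).length :=
  List.length_pos_iff.2 (dfs_ne_nil t)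

theorem dfs_getElem?_zero (t : PTree V) : (dfs t)[0]? = some (root t) := by
  cases t with
  | node v ts => rw [dfs]; simp

theorem root_mem_verts (t : PTree V) : root t ∈ verts t := by
  cases t with
  | node v ts => rw [verts]; simp

theorem mem_verts_of_mem_dfs : ∀ t : PTree V, ∀ x ∈ dfs t, x ∈ verts t := by
  refine consInd _ ?_ ?_
  · intro v x hx
    rw [dfs_nil] at hx; rw [verts_nil]; exact hx
  · intro v t ts ih1 ih2 x hx
    rw [dfs_cons, List.mem_cons, List.mem_append] at hx
    rcases hx with rfl | hx | hx
    · simpa using root_mem_verts (node x (t :: ts))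
    · exact ((verts_cons_perm v t ts).mem_iff).2 (List.mem_append.2 (Or.inl (ih1 x hx)))
    · exact ((verts_cons_perm v t ts).mem_iff).2 (List.mem_append.2 (Or.inr (ih2 x hx)))

theorem mem_verts_of_arc : ∀ t : PTree V, ∀ a b : V,
    (a, b) ∈ downArcs t → a ∈ verts t ∧ b ∈ verts t := by
  refine consInd _ ?_ ?_
  · intro v a b h; rw [downArcs_nil] at h; simp at h
  · intro v t ts ih1 ih2 a b h
    have hmem : ∀ x : V, x ∈ verts t ∨ x ∈ verts (node v ts) → x ∈ verts (node v (t :: ts)) := by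
      intro x hx
      rw [(verts_cons_perm v t ts).mem_iff, List.mem_append]; exact hx
    rcases (mem_downArcs_cons v t ts (a, b)).1 h with h | h | h
    · rw [Prod.ext_iff] at h
      obtain ⟨h1, h2⟩ := h
      simp only at h1 h2
      constructor
      · rw [h1]; exact hmem _ (Or.inr (by simpa using root_mem_verts (node v ts)))
      · rw [h2]; exact hmem _ (Or.inl (root_mem_verts t))
    · exact ⟨hmem _ (Or.inl (ih1 a b h).1), hmem _ (Or.inl (ih1 a b h).2)⟩
    · exact ⟨hmem _ (Or.inr (ih2 a b h).1), hmem _ (Or.inr (ih2 a b h).2)⟩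

theorem nodup_split {v : V} {t : PTree V} {ts : List (PTree V)}
    (h : (verts (node v (t :: ts))).Nodup) :
    (verts t).Nodup ∧ (verts (node v ts)).Nodup ∧
      ∀ x ∈ verts t, x ∉ verts (node v ts) := by
  rw [(verts_cons_perm v t ts).nodup_iff, List.nodup_append] at h
  exact ⟨h.1, h.2.1, fun x hx hx' => h.2.2 x hx x hx' rfl⟩

theorem root_not_mem_sub {v : V} {t : PTree V} {ts : List (PTree V)}
    (h : (verts (node v (t :: ts))).Nodup) : v ∉ verts t := by
  intro hv
  exact (nodup_split h).2.2 v hv (root_mem_verts (node v ts))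

theorem dfs_getLast? : ∀ t : PTree V, (dfs t).getLast? = some (root t) := by
  refine consInd _ ?_ ?_
  · intro v; rw [dfs_nil]; simp
  · intro v t ts ih1 ih2
    rw [dfs_cons, ← List.cons_append,
      List.getLast?_append_of_ne_nil _ (dfs_ne_nil (node v ts)), ih2]
    simp

theorem length_dlist : ∀ t : PTree V, (dlist t).length = (dfs t).length := by
  refine consInd _ ?_ ?_
  · intro v; rw [dfs_nil, dlist_nil]; rfl
  · intro v t ts ih1 ih2
    rw [dfs_cons, dlist_cons]; simp [ih1, ih2]

theorem dlist_ne_nil (t : PTree V) : dlist t ≠ [] := by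
  intro h
  have h2 := length_dlist t
  rw [h] at h2
  have := length_dfs_pos t
  simp at h2; omega

theorem dlist_getElem?_zero (t : PTree V) : (dlist t)[0]? = some 0 := by
  cases t with
  | node v ts => rw [dlist]; simp

theorem dlist_getLast? : ∀ t : PTree V, (dlist t).getLast? = some 0 := by
  refine consInd _ ?_ ?_
  · intro v; rw [dlist_nil]; simp
  · intro v t ts ih1 ih2
    rw [dlist_cons, ← List.cons_append,
      List.getLast?_append_of_ne_nil _ (dlist_ne_nil (node v ts)), ih2]

theorem snd_arc_ne_root : ∀ t : PTree V, (verts t).Nodup →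
    ∀ a b : V, (a, b) ∈ downArcs t → b ≠ root t := by
  refine consInd _ ?_ ?_
  · intro v _ a b h; rw [downArcs_nil] at h; simp at h
  · intro v t ts ih1 ih2 hnd a b h
    obtain ⟨nd1, nd2, disj⟩ := nodup_split hnd
    simp only [root_node]
    rcases (mem_downArcs_cons v t ts (a, b)).1 h with h | h | h
    · rw [Prod.mk.injEq] at h
      intro hbv
      rw [hbv] at h
      have : v ∈ verts t := h.2 ▸ root_mem_verts t
      exact disj v this (by simpa using root_mem_verts (node v ts))
    · intro hbv
      have hb : b ∈ verts t := (mem_verts_of_arc t a b h).2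
      rw [hbv] at hb
      exact disj v hb (by simpa using root_mem_verts (node v ts))
    · exact (by simpa using ih2 nd2 a b h)

theorem unique_parent : ∀ t : PTree V, (verts t).Nodup →
    ∀ p q x : V, (p, x) ∈ downArcs t → (q, x) ∈ downArcs t → p = q := by
  refine consInd _ ?_ ?_
  · intro v _ p q x h; rw [downArcs_nil] at h; simp at h
  · intro v t ts ih1 ih2 hnd p q x h1 h2
    obtain ⟨nd1, nd2, disj⟩ := nodup_split hnd
    rcases (mem_downArcs_cons v t ts (p, x)).1 h1 with h1 | h1 | h1 <;>
      rcases (mem_downArcs_cons v t ts (q, x)).1 h2 with h2 | h2 | h2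
    · rw [Prod.mk.injEq] at h1 h2; rw [h1.1, h2.1]
    · rw [Prod.mk.injEq] at h1
      exact absurd h1.2 (snd_arc_ne_root t nd1 q x h2)
    · rw [Prod.mk.injEq] at h1
      have hx2 := (mem_verts_of_arc (node v ts) q x h2).2
      exact absurd hx2 (disj x (h1.2 ▸ root_mem_verts t))
    · rw [Prod.mk.injEq] at h2
      exact absurd h2.2 (snd_arc_ne_root t nd1 p x h1)
    · exact ih1 nd1 p q x h1 h2
    · exact absurd (mem_verts_of_arc (node v ts) q x h2).2 (disj x (mem_verts_of_arc t p x h1).2)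
    · rw [Prod.mk.injEq] at h2
      have hx1 := (mem_verts_of_arc (node v ts) p x h1).2
      exact absurd hx1 (disj x (h2.2 ▸ root_mem_verts t))
    · exact absurd (mem_verts_of_arc (node v ts) p x h1).2 (disj x (mem_verts_of_arc t q x h2).2)
    · exact ih2 nd2 p q x h1 h2

theorem downArcs_of_dfs_len_one (t : PTree V) (h : (dfs t).length = 1) :
    downArcs t = [] := by
  cases t with
  | node v ts =>
    cases ts with
    | nil => exact downArcs_nil v
    | cons t' ts' =>
      rw [dfs_cons] at h
      have := length_dfs_pos t'
      have := length_dfs_pos (node v ts')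
      simp only [List.length_cons, List.length_append] at h
      omega

theorem arc_sub_left {v : V} {t : PTree V} {ts : List (PTree V)} {p : V × V}
    (h : p ∈ downArcs t) : p ∈ downArcs (node v (t :: ts)) :=
  (mem_downArcs_cons v t ts p).2 (Or.inr (Or.inl h))

theorem arc_sub_right {v : V} {t : PTree V} {ts : List (PTree V)} {p : V × V}
    (h : p ∈ downArcs (node v ts)) : p ∈ downArcs (node v (t :: ts)) :=
  (mem_downArcs_cons v t ts p).2 (Or.inr (Or.inr h))

theorem arc_head {v : V} {t : PTree V} {ts : List (PTree V)} :
    (v, root t) ∈ downArcs (node v (t :: ts)) :=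
  (mem_downArcs_cons v t ts _).2 (Or.inl rfl)

theorem step : ∀ t : PTree V, ∀ (k : ℕ) (a b : V) (da db : ℕ),
    (dfs t)[k]? = some a → (dfs t)[k+1]? = some b →
    (dlist t)[k]? = some da → (dlist t)[k+1]? = some db →
    (db = da + 1 ∧ (a, b) ∈ downArcs t) ∨ (da = db + 1 ∧ (b, a) ∈ downArcs t) := by
  refine consInd _ ?_ ?_
  · intro v k a b da db ha hb hda hdb
    rw [dfs_nil, List.getElem?_eq_some_iff] at hb
    obtain ⟨h, -⟩ := hb
    simp at h
  · intro v t ts ih1 ih2 k a b da db ha hb hda hdb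
    rw [dfs_cons] at ha hb
    rw [dlist_cons] at hda hdb
    have hln : ((dlist t).map (· + 1)).length = (dfs t).length := by
      rw [List.length_map, length_dlist]
    have hn1 : 0 < (dfs t).length := length_dfs_pos t
    cases k with
    | zero =>
      rw [List.getElem?_cons_zero, Option.some.injEq] at ha hda
      rw [List.getElem?_cons_succ] at hb hdb
      rw [List.getElem?_append_left hn1, dfs_getElem?_zero, Option.some.injEq] at hb
      rw [List.getElem?_append_left (by omega), List.getElem?_map,
        dlist_getElem?_zero] at hdb
      simp only [Option.map_some, Option.some.injEq] at hdb
      left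
      refine ⟨by omega, ?_⟩
      rw [← ha, ← hb]
      exact arc_head
    | succ k =>
      rw [List.getElem?_cons_succ] at ha hb hda hdb
      rcases lt_trichotomy (k + 1) (dfs t).length with hlt | heq | hgt
      · rw [List.getElem?_append_left (show k < (dfs t).length by omega)] at ha
        rw [List.getElem?_append_left hlt] at hb
        rw [List.getElem?_append_left (by omega), List.getElem?_map] at hda
        rw [List.getElem?_append_left (by omega), List.getElem?_map] at hdb
        obtain ⟨da', hda', rfl⟩ := Option.map_eq_some_iff.1 hda
        obtain ⟨db', hdb', rfl⟩ := Option.map_eq_some_iff.1 hdb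
        rcases ih1 k a b da' db' ha hb hda' hdb' with ⟨h1, h2⟩ | ⟨h1, h2⟩
        · exact Or.inl ⟨by omega, arc_sub_left h2⟩
        · exact Or.inr ⟨by omega, arc_sub_left h2⟩
      · -- junction : k = (dfs t).length - 1
        rw [List.getElem?_append_left (show k < (dfs t).length by omega)] at ha
        have hklast : k = (dfs t).length - 1 := by omega
        rw [hklast, ← List.getLast?_eq_getElem?, dfs_getLast?, Option.some.injEq] at ha
        rw [List.getElem?_append_right (by omega : (dfs t).length ≤ k + 1),
          (by omega : k + 1 - (dfs t).length = 0), dfs_getElem?_zero, Option.some.injEq] at hb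
        rw [List.getElem?_append_left (by omega), List.getElem?_map, hklast,
          ← length_dlist, ← List.getLast?_eq_getElem?, dlist_getLast?] at hda
        simp only [Option.map_some, Option.some.injEq] at hda
        rw [List.getElem?_append_right (by omega : ((dlist t).map (· + 1)).length ≤ k + 1)] at hdb
        rw [(by omega : k + 1 - ((dlist t).map (· + 1)).length = 0), dlist_getElem?_zero,
          Option.some.injEq] at hdb
        right
        refine ⟨by omega, ?_⟩
        rw [← ha, ← hb]
        simpa using arc_head
      · -- inside B
        have hge : (dfs t).length ≤ k := by omega
        rw [List.getElem?_append_right hge] at ha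
        rw [List.getElem?_append_right (by omega : (dfs t).length ≤ k + 1),
          (by omega : k + 1 - (dfs t).length = (k - (dfs t).length) + 1)] at hb
        rw [List.getElem?_append_right (by omega : ((dlist t).map (· + 1)).length ≤ k), hln] at hda
        rw [List.getElem?_append_right (by omega : ((dlist t).map (· + 1)).length ≤ k + 1), hln,
          (by omega : k + 1 - (dfs t).length = (k - (dfs t).length) + 1)] at hdb
        rcases ih2 (k - (dfs t).length) a b da db ha hb hda hdb with ⟨h1, h2⟩ | ⟨h1, h2⟩
        · exact Or.inl ⟨h1, arc_sub_right h2⟩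
        · exact Or.inr ⟨h1, arc_sub_right h2⟩

theorem depth_root : ∀ t : PTree V, (verts t).Nodup →
    ∀ k : ℕ, (dfs t)[k]? = some (root t) → (dlist t)[k]? = some 0 := by
  refine consInd _ ?_ ?_
  · intro v _ k h
    rw [dfs_nil, List.getElem?_eq_some_iff] at h
    obtain ⟨hk, -⟩ := h
    simp at hk
    rw [hk, dlist_nil]
    rfl
  · intro v t ts ih1 ih2 hnd k h
    obtain ⟨nd1, nd2, disj⟩ := nodup_split hnd
    rw [dfs_cons] at h
    rw [dlist_cons]
    simp only [root_node] at h
    cases k with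
    | zero => simp
    | succ k =>
      rw [List.getElem?_cons_succ] at h
      rw [List.getElem?_cons_succ]
      rcases lt_or_ge k (dfs t).length with hlt | hge
      · rw [List.getElem?_append_left hlt] at h
        exfalso
        have : v ∈ verts t := by
          rw [List.getElem?_eq_some_iff] at h
          obtain ⟨hk, hh⟩ := h
          exact mem_verts_of_mem_dfs t v (hh ▸ List.getElem_mem hk)
        exact disj v this (by simpa using root_mem_verts (node v ts))
      · rw [List.getElem?_append_right hge] at h
        rw [List.getElem?_append_right (by rw [List.length_map, length_dlist]; exact hge),
          List.length_map, length_dlist]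
        exact ih2 nd2 _ (by simpa using h)

theorem depth_eq : ∀ t : PTree V, (verts t).Nodup →
    ∀ (a b : ℕ) (x : V), (dfs t)[a]? = some x → (dfs t)[b]? = some x →
      (dlist t)[a]? = (dlist t)[b]? := by
  refine consInd _ ?_ ?_
  · intro v _ a b x ha hb
    rw [dfs_nil, List.getElem?_eq_some_iff] at ha hb
    obtain ⟨ha', -⟩ := ha
    obtain ⟨hb', -⟩ := hb
    simp at ha' hb'
    rw [ha', hb']
  · intro v t ts ih1 ih2 hnd a b x ha hb
    obtain ⟨nd1, nd2, disj⟩ := nodup_split hnd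
    rw [dfs_cons] at ha hb
    rw [dlist_cons]
    have hmemA : ∀ (k : ℕ) (y : V), (dfs t)[k]? = some y → y ∈ verts t := by
      intro k y h
      rw [List.getElem?_eq_some_iff] at h
      obtain ⟨hk, hh⟩ := h
      exact mem_verts_of_mem_dfs t y (hh ▸ List.getElem_mem hk)
    have hmemB : ∀ (k : ℕ) (y : V), (dfs (node v ts))[k]? = some y → y ∈ verts (node v ts) := by
      intro k y h
      rw [List.getElem?_eq_some_iff] at h
      obtain ⟨hk, hh⟩ := h
      exact mem_verts_of_mem_dfs _ y (hh ▸ List.getElem_mem hk)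
    have hvr : v ∈ verts (node v ts) := by simpa using root_mem_verts (node v ts)
    -- helper: if position k+1 is in the A-zone and value is v, contradiction
    cases a with
    | zero =>
      rw [List.getElem?_cons_zero, Option.some.injEq] at ha
      cases b with
      | zero => rfl
      | succ b =>
        rw [List.getElem?_cons_succ] at hb
        rw [List.getElem?_cons_zero, List.getElem?_cons_succ]
        rcases lt_or_ge b (dfs t).length with hlt | hge
        · rw [List.getElem?_append_left hlt] at hb
          exact absurd hvr (disj v (ha ▸ hmemA b x hb))
        · rw [List.getElem?_append_right hge] at hb
          rw [List.getElem?_append_right (by rw [List.length_map, length_dlist]; exact hge),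
            List.length_map, length_dlist]
          rw [← ha] at hb
          exact (depth_root (node v ts) nd2 _ (by simpa using hb)).symm
    | succ a =>
      rw [List.getElem?_cons_succ] at ha
      cases b with
      | zero =>
        rw [List.getElem?_cons_zero, Option.some.injEq] at hb
        rw [List.getElem?_cons_succ, List.getElem?_cons_zero]
        rcases lt_or_ge a (dfs t).length with hlt | hge
        · rw [List.getElem?_append_left hlt] at ha
          exact absurd hvr (disj v (hb ▸ hmemA a x ha))
        · rw [List.getElem?_append_right hge] at ha
          rw [List.getElem?_append_right (by rw [List.length_map, length_dlist]; exact hge),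
            List.length_map, length_dlist]
          rw [← hb] at ha
          exact depth_root (node v ts) nd2 _ (by simpa using ha)
      | succ b =>
        rw [List.getElem?_cons_succ] at hb
        rw [List.getElem?_cons_succ, List.getElem?_cons_succ]
        rcases lt_or_ge a (dfs t).length with hlta | hgea <;>
          rcases lt_or_ge b (dfs t).length with hltb | hgeb
        · rw [List.getElem?_append_left hlta] at ha
          rw [List.getElem?_append_left hltb] at hb
          rw [List.getElem?_append_left (by rw [List.length_map, length_dlist]; exact hlta),
            List.getElem?_append_left (by rw [List.length_map, length_dlist]; exact hltb),
            List.getElem?_map, List.getElem?_map, ih1 nd1 a b x ha hb]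
        · rw [List.getElem?_append_left hlta] at ha
          rw [List.getElem?_append_right hgeb] at hb
          exact absurd (hmemB _ x hb) (disj x (hmemA a x ha))
        · rw [List.getElem?_append_right hgea] at ha
          rw [List.getElem?_append_left hltb] at hb
          exact absurd (hmemB _ x ha) (disj x (hmemA b x hb))
        · rw [List.getElem?_append_right hgea] at ha
          rw [List.getElem?_append_right hgeb] at hb
          rw [List.getElem?_append_right (by rw [List.length_map, length_dlist]; exact hgea),
            List.getElem?_append_right (by rw [List.length_map, length_dlist]; exact hgeb),
            List.length_map, length_dlist]
          exact ih2 nd2 _ _ x ha hb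

theorem recoil : ∀ t : PTree V, (verts t).Nodup →
    ∀ (l : ℕ) (x y : V), (dfs t)[l]? = some x → (dfs t)[l+1]? = some y →
      (dfs t)[l+2]? = some x →
      y ≠ root t ∧ ∀ c : V, (y, c) ∉ downArcs t := by
  refine consInd _ ?_ ?_
  · intro v _ l x y _ hb _
    rw [dfs_nil, List.getElem?_eq_some_iff] at hb
    obtain ⟨hk, -⟩ := hb
    simp at hk
  · intro v t ts ih1 ih2 hnd l x y h0 h1 h2
    obtain ⟨nd1, nd2, disj⟩ := nodup_split hnd
    rw [dfs_cons] at h0 h1 h2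
    have hmemA : ∀ (k : ℕ) (z : V), (dfs t)[k]? = some z → z ∈ verts t := by
      intro k z h
      rw [List.getElem?_eq_some_iff] at h
      obtain ⟨hk, hh⟩ := h
      exact mem_verts_of_mem_dfs t z (hh ▸ List.getElem_mem hk)
    have hmemB : ∀ (k : ℕ) (z : V), (dfs (node v ts))[k]? = some z → z ∈ verts (node v ts) := by
      intro k z h
      rw [List.getElem?_eq_some_iff] at h
      obtain ⟨hk, hh⟩ := h
      exact mem_verts_of_mem_dfs _ z (hh ▸ List.getElem_mem hk)
    have hvr : v ∈ verts (node v ts) := by simpa using root_mem_verts (node v ts)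
    have hn1 : 0 < (dfs t).length := length_dfs_pos t
    -- the main split
    have main : (y ∈ verts t ∧ y ≠ root t ∧ ∀ c : V, (y, c) ∉ downArcs t) ∨
        (y ∈ verts (node v ts) ∧ y ≠ v ∧ ∀ c : V, (y, c) ∉ downArcs (node v ts)) ∨
        (y = root t ∧ (dfs t).length = 1) := by
      cases l with
      | zero =>
        rw [List.getElem?_cons_zero, Option.some.injEq] at h0
        rw [List.getElem?_cons_succ] at h1 h2
        rw [List.getElem?_append_left hn1] at h1
        rcases lt_or_ge 1 (dfs t).length with hlt | hge
        · rw [List.getElem?_append_left hlt] at h2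
          exact absurd hvr (disj v (h0 ▸ hmemA 1 x h2))
        · have hlen1 : (dfs t).length = 1 := by omega
          right; right
          refine ⟨?_, hlen1⟩
          rw [dfs_getElem?_zero t, Option.some.injEq] at h1
          exact h1.symm
      | succ l =>
        rw [List.getElem?_cons_succ] at h0 h1 h2
        rcases lt_or_ge (l + 2) (dfs t).length with hlt | hge
        · rw [List.getElem?_append_left (by omega)] at h0
          rw [List.getElem?_append_left (by omega)] at h1
          rw [List.getElem?_append_left hlt] at h2
          obtain ⟨hyr, hyc⟩ := ih1 nd1 l x y h0 h1 h2
          exact Or.inl ⟨hmemA _ y h1, hyr, hyc⟩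
        · rcases lt_or_ge l (dfs t).length with hlt0 | hge0
          · -- l < n ≤ l + 2 : x is in A-zone, and one of positions l+1, l+2 is in B-zone
            rw [List.getElem?_append_left hlt0] at h0
            have hxA : x ∈ verts t := hmemA _ x h0
            exfalso
            rcases lt_or_ge (l + 1) (dfs t).length with hlt1 | hge1
            · -- l + 2 = n exactly: position l+2 is B[0] = v
              rw [List.getElem?_append_right hge,
                (by omega : l + 2 - (dfs t).length = 0), dfs_getElem?_zero,
                Option.some.injEq] at h2
              rw [← h2] at hxA
              exact disj _ hxA hvr
            · -- l + 1 = n : position l+2 is B[1], value x also in A at l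
              rw [List.getElem?_append_right hge] at h2
              exact disj x hxA (hmemB _ x h2)
          · -- everything in B-zone
            rw [List.getElem?_append_right hge0] at h0
            rw [List.getElem?_append_right (by omega : (dfs t).length ≤ l + 1),
              (by omega : l + 1 - (dfs t).length = (l - (dfs t).length) + 1)] at h1
            rw [List.getElem?_append_right (by omega : (dfs t).length ≤ l + 2),
              (by omega : l + 2 - (dfs t).length = (l - (dfs t).length) + 2)] at h2
            obtain ⟨hyr, hyc⟩ := ih2 nd2 (l - (dfs t).length) x y h0 h1 h2
            exact Or.inr (Or.inl ⟨hmemB _ y h1, by simpa using hyr, hyc⟩)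
    -- now derive conclusions
    rcases main with ⟨hyA, hyr, hyc⟩ | ⟨hyB, hyv, hyc⟩ | ⟨hyroot, hlen1⟩
    · have hyv : y ≠ v := fun h => disj y hyA (h ▸ hvr)
      refine ⟨by simpa using hyv, ?_⟩
      intro c hc
      rcases (mem_downArcs_cons v t ts (y, c)).1 hc with h | h | h
      · rw [Prod.mk.injEq] at h
        exact hyv h.1
      · exact hyc c h
      · exact disj y hyA (mem_verts_of_arc (node v ts) y c h).1
    · refine ⟨by simpa using hyv, ?_⟩
      intro c hc
      rcases (mem_downArcs_cons v t ts (y, c)).1 hc with h | h | h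
      · rw [Prod.mk.injEq] at h
        exact hyv h.1
      · exact disj y (mem_verts_of_arc t y c h).1 hyB
      · exact hyc c h
    · -- y = root t, and t is a leaf
      have hyA : y ∈ verts t := hyroot ▸ root_mem_verts t
      have hyv : y ≠ v := fun h => disj y hyA (h ▸ hvr)
      refine ⟨by simpa using hyv, ?_⟩
      intro c hc
      rcases (mem_downArcs_cons v t ts (y, c)).1 hc with h | h | h
      · rw [Prod.mk.injEq] at h
        exact hyv h.1
      · rw [downArcs_of_dfs_len_one t hlen1] at h
        simp at h
      · exact disj y hyA (mem_verts_of_arc (node v ts) y c h).1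

/-- The subwalk of the DFS walk between two consecutive in-indices `u < v` is a path
in the tree: its vertices are pairwise distinct. -/
theorem subwalk_between_consecutive_in_indices_is_path (t : PTree V)
    (A0 : Set (V × V))
    (hnd : (verts t).Nodup)
    (hor : ∀ i j : V, (i, j) ∈ downArcs t → ((i, j) ∈ A0 ↔ (j, i) ∉ A0))
    (hasc : AscFirst A0 t)
    (u v : ℕ) (huv : u < v)
    (hu : ∃ i, InIndex t A0 i u) (hv : ∃ j, InIndex t A0 j v)
    (hcons : ∀ l : ℕ, u < l → l < v → ¬ ∃ i, InIndex t A0 i l) :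
    (((dfs t).drop u).take (v - u + 1)).Nodup := by
  classical
  obtain ⟨j, hj⟩ := hv
  have hvlen : v < (dfs t).length - 1 := hj.1
  have hpos : 0 < (dfs t).length := length_dfs_pos t
  have hdl : (dlist t).length = (dfs t).length := length_dlist t
  have hsome : ∀ k : ℕ, k < (dfs t).length → ∃ z : V, (dfs t)[k]? = some z := by
    intro k hk; exact ⟨_, List.getElem?_eq_getElem hk⟩
  set f : ℕ → ℕ := fun k => ((dlist t)[k]?).getD 0 with hfdef
  have hfd : ∀ k : ℕ, k < (dfs t).length → (dlist t)[k]? = some (f k) := by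
    intro k hk
    have hk' : k < (dlist t).length := by omega
    rw [hfdef]
    simp only
    rw [List.getElem?_eq_getElem hk']
    rfl
  have hrec : ∀ (l : ℕ) (x y : V), u < l + 1 → l + 1 < v →
      (dfs t)[l]? = some x → (dfs t)[l+1]? = some y → (dfs t)[l+2]? = some x → False := by
    intro l x y hul hlv h0 h1 h2
    obtain ⟨hyr, hyc⟩ := recoil t hnd l x y h0 h1 h2
    exact hcons (l+1) hul hlv ⟨y, ⟨by omega, h1, hyr,
      fun l' c hc harc => absurd harc (hyc c)⟩⟩
  have hstep : ∀ k : ℕ, k + 1 < (dfs t).length →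
      ∃ ak bk : V, (dfs t)[k]? = some ak ∧ (dfs t)[k+1]? = some bk ∧
        ((f (k+1) = f k + 1 ∧ (ak, bk) ∈ downArcs t) ∨
          (f k = f (k+1) + 1 ∧ (bk, ak) ∈ downArcs t)) := by
    intro k hk
    obtain ⟨ak, hak⟩ := hsome k (by omega)
    obtain ⟨bk, hbk⟩ := hsome (k+1) hk
    exact ⟨ak, bk, hak, hbk,
      step t k ak bk (f k) (f (k+1)) hak hbk (hfd k (by omega)) (hfd (k+1) (by omega))⟩
  have key : ∀ d a b : ℕ, u ≤ a → a < b → b ≤ v → b - a ≤ d →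
      (dfs t)[a]? ≠ (dfs t)[b]? := by
    intro d
    induction d with
    | zero => intro a b _ hab _ hd; omega
    | succ d ih =>
      intro a b hua hab hbv hd heq
      have hblen : b < (dfs t).length := by omega
      obtain ⟨x, hax⟩ := hsome a (by omega)
      have hbx : (dfs t)[b]? = some x := by rw [← heq]; exact hax
      have hfab : f a = f b := by
        have h := depth_eq t hnd a b x hax hbx
        rw [hfd a (by omega), hfd b (by omega)] at h
        exact Option.some_injective _ h
      obtain ⟨m, hmIcc, hmax⟩ := Finset.exists_max_image (Finset.Icc a b) f
        ⟨a, Finset.mem_Icc.2 ⟨le_rfl, by omega⟩⟩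
      rw [Finset.mem_Icc] at hmIcc
      have hmax' : ∀ k, a ≤ k → k ≤ b → f k ≤ f m :=
        fun k h1 h2 => hmax k (Finset.mem_Icc.2 ⟨h1, h2⟩)
      by_cases hflt : f a < f m
      · -- interior strict max gives a recoil
        have hma : a < m := by
          rcases Nat.lt_or_ge a m with h | h
          · exact h
          · exfalso; have : m = a := by omega
            rw [this] at hflt; omega
        have hmb : m < b := by
          rcases Nat.lt_or_ge m b with h | h
          · exact h
          · exfalso; have : m = b := by omega
            rw [this] at hflt; omega
        obtain ⟨m', rfl⟩ : ∃ m', m = m' + 1 := ⟨m - 1, by omega⟩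
        obtain ⟨a1, b1, h1a, h1b, h1⟩ := hstep m' (by omega)
        obtain ⟨a2, b2, h2a, h2b, h2⟩ := hstep (m' + 1) (by omega)
        rw [(by omega : m' + 1 + 1 = m' + 2)] at h2b h2
        have hb1a2 : b1 = a2 := by
          rw [h2a] at h1b; exact (Option.some_injective _ h1b).symm
        rcases h1 with ⟨hv1, harc1⟩ | ⟨hv1, harc1⟩
        · rcases h2 with ⟨hv2, harc2⟩ | ⟨hv2, harc2⟩
          · have := hmax' (m' + 2) (by omega) (by omega); omega
          · have hpar : a1 = b2 :=
              unique_parent t hnd a1 b2 b1 harc1 (by rw [← hb1a2] at harc2; exact harc2)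
            exact hrec m' a1 b1 (by omega) (by omega) h1a h1b
              (by rw [hpar]; exact h2b)
        · have := hmax' m' (by omega) (by omega); omega
      · -- the max equals the common endpoint depth
        have hfm : f m ≤ f a := by omega
        have hall : ∀ k, a ≤ k → k ≤ b → f k ≤ f a :=
          fun k h1 h2 => le_trans (hmax' k h1 h2) hfm
        by_cases hb1 : b = a + 1
        · obtain ⟨a1, b1, h1a, h1b, h1⟩ := hstep a (by omega)
          rw [hb1] at hfab
          rcases h1 with ⟨hv1, -⟩ | ⟨hv1, -⟩ <;> omega
        · obtain ⟨a1, b1, h1a, h1b, h1⟩ := hstep a (by omega)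
          obtain ⟨b', rfl⟩ : ∃ b', b = b' + 1 := ⟨b - 1, by omega⟩
          obtain ⟨a2, b2, h2a, h2b, h2⟩ := hstep b' (by omega)
          rcases h1 with ⟨hv1, -⟩ | ⟨hv1, harc1⟩
          · have := hall (a + 1) (by omega) (by omega); omega
          rcases h2 with ⟨hv2, harc2⟩ | ⟨hv2, -⟩
          swap
          · have := hall b' (by omega) (by omega); omega
          have ha1x : a1 = x := by
            rw [h1a] at hax; exact Option.some_injective _ hax
          have hb2x : b2 = x := by
            rw [h2b] at hbx; exact Option.some_injective _ hbx
          have hpar : b1 = a2 := unique_parent t hnd b1 a2 x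
            (by rw [← ha1x]; exact harc1) (by rw [← hb2x]; exact harc2)
          rcases Nat.lt_trichotomy (a + 1) b' with hlt2 | heq2 | hgt2
          · exact ih (a + 1) b' (by omega) hlt2 (by omega) (by omega)
              (by rw [h1b, h2a, hpar])
          · exact hrec a x b1 (by omega) (by omega) hax h1b
              (by rw [show a + 2 = b' + 1 by omega]; exact hbx)
          · omega
  rw [List.nodup_iff_getElem?_ne_getElem?]
  intro i j hij hjlen
  have hlen_seg : (((dfs t).drop u).take (v - u + 1)).length = v - u + 1 := by
    rw [List.length_take, List.length_drop]
    omega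
  rw [hlen_seg] at hjlen
  simp only [List.getElem?_take, List.getElem?_drop]
  rw [if_pos (show i < v - u + 1 by omega), if_pos (show j < v - u + 1 by omega)]
  exact key v (u + i) (u + j) (by omega) (by omega) (by omega) (by omega)

end PTree
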